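/- Let p be a prime, m ≥ 1, and c ∈ Z(SU(p)) with c ≠ 1. Suppose x̲ = (x_1,...,x_m), y̲ = (y_1,...,y_m) and z̲ = (z_1,...,z_m) are elements of SU(p)^m such that [x_i, y_i] = c for all i, and there are integers a, b with 0 ≤ a, b < p such that [x_i, z_i] = c^b and [y_i, z_i] = c^a for all i. Then there exists w̲ = (w_1,...,w_m) with each w_i ∈ Z(SU(p)) such that z_i = w_i · x_i^{-a} · y_i^{b} for all i. -/

import Mathlib

/-!
Common setup: the special unitary group `SU(p)`, the central product
`G_{m,p} = SU(p)^m / Δ(Z/p)`, the space `Hom(Z^n, G)` of commuting `n`-tuples,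
and the moduli space `Rep(Z^n, G) = Hom(Z^n, G)/G`.
-/

/-- The special unitary group `SU(p)`: the subgroup of the unitary group of `p × p`
complex matrices consisting of the matrices of determinant `1`. -/
def SUgrp (p : ℕ) : Subgroup (Matrix.unitaryGroup (Fin p) ℂ) :=
  MonoidHom.ker (Matrix.detMonoidHom.comp (Matrix.unitaryGroup (Fin p) ℂ).subtype)

/-- `SU p` as a topological group (topologized as a subspace of the matrices). -/
abbrev SU (p : ℕ) : Type := SUgrp p

/-- The underlying `p × p` complex matrix of an element of `SU p`. -/
noncomputable def SU.mat {p : ℕ} (x : SU p) : Matrix (Fin p) (Fin p) ℂ :=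
  ((x : Matrix.unitaryGroup (Fin p) ℂ) : Matrix (Fin p) (Fin p) ℂ)

/-- The diagonal embedding of a group into an `m`-fold product. -/
def diagHom (G : Type*) [Group G] (m : ℕ) : G →* (Fin m → G) where
  toFun g := fun _ => g
  map_one' := rfl
  map_mul' _ _ := rfl

/-- The diagonal central subgroup `Δ(Z/p) ⊆ SU(p)^m`, consisting of the constant tuples
`(z, ..., z)` with `z` in the center of `SU(p)`. -/
def DeltaZp (p m : ℕ) : Subgroup (Fin m → SU p) :=
  (Subgroup.center (SU p)).map (diagHom (SU p) m)

instance DeltaZp.normal (p m : ℕ) : (DeltaZp p m).Normal := by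
  constructor
  intro x hx g
  obtain ⟨z, hz, rfl⟩ := hx
  refine ⟨z, hz, ?_⟩
  funext i
  simp only [diagHom, MonoidHom.coe_mk, OneHom.coe_mk, Pi.mul_apply, Pi.inv_apply]
  rw [SetLike.mem_coe, Subgroup.mem_center_iff] at hz
  rw [hz (g i), mul_assoc, mul_inv_cancel, mul_one]

/-- The central product `G_{m,p} = SU(p)^m / Δ(Z/p)`, a topological group with the
quotient topology. -/
abbrev Gmp (p m : ℕ) : Type := (Fin m → SU p) ⧸ DeltaZp p m

/-- `Hom(Z^n, G)`: the space of commuting `n`-tuples in `G`, topologized as a subspace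
of `G^n`. -/
def commTuples (G : Type*) [Group G] (n : ℕ) : Set (Fin n → G) :=
  {f | ∀ i j, Commute (f i) (f j)}

/-- The trivial commuting tuple `(1, ..., 1)`. -/
def trivTuple (G : Type*) [Group G] (n : ℕ) : commTuples G n :=
  ⟨fun _ => 1, fun _ _ => Commute.one_left 1⟩

/-- The simultaneous-conjugation equivalence relation on the space of commuting
`n`-tuples in `G`. -/
def conjSetoid (G : Type*) [Group G] (n : ℕ) : Setoid (commTuples G n) where
  r x y := ∃ g : G, ∀ i, (y : Fin n → G) i = g * (x : Fin n → G) i * g⁻¹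
  iseqv := by
    constructor
    · exact fun x => ⟨1, fun i => by group⟩
    · rintro x y ⟨g, hg⟩
      exact ⟨g⁻¹, fun i => by rw [hg i]; group⟩
    · rintro x y z ⟨g, hg⟩ ⟨h, hh⟩
      exact ⟨h * g, fun i => by rw [hh i, hg i]; group⟩

/-- `Rep(Z^n, G) = Hom(Z^n, G)/G`: the quotient of the space of commuting `n`-tuples by
simultaneous conjugation, with the quotient topology. -/
abbrev RepSpace (G : Type*) [Group G] [TopologicalSpace G] (n : ℕ) : Type _ :=
  Quotient (conjSetoid G n)

/-- `N(n,m,p) = p^((m-1)(n-2))·(p^n − 1)·(p^(n-1) − 1)/(p² − 1) + 1` (the division is exact). -/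
def Ncomp (n m p : ℕ) : ℕ :=
  p ^ ((m - 1) * (n - 2)) * (p ^ n - 1) * (p ^ (n - 1) - 1) / (p ^ 2 - 1) + 1


open Matrix in
lemma scalar_of_commutes {p : ℕ} (hp : p.Prime) (ζ : ℂ) (hζp : ζ ^ p = 1) (hζ1 : ζ ≠ 1)
    (A B W : Matrix (Fin p) (Fin p) ℂ) (hA : IsUnit A) (hB : IsUnit B)
    (hAB : A * B = ζ • (B * A)) (hWA : W * A = A * W) (hWB : W * B = B * W) :
    ∃ μ : ℂ, W = μ • (1 : Matrix (Fin p) (Fin p) ℂ) := by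
  classical
  haveI : Nonempty (Fin p) := ⟨⟨0, hp.pos⟩⟩
  have hord : orderOf ζ = p := by
    rcases (Nat.Prime.eq_one_or_self_of_dvd hp _ (orderOf_dvd_of_pow_eq_one hζp)) with h | h
    · exact absurd (orderOf_eq_one_iff.1 h) hζ1
    · exact h
  have hζpow : ∀ i j : ℕ, i < p → j < p → ζ ^ i = ζ ^ j → i = j := by
    intro i j hi hj hij
    exact pow_injOn_Iio_orderOf (by simpa [hord] using hi) (by simpa [hord] using hj) hij
  have hinj : ∀ (M : Matrix (Fin p) (Fin p) ℂ), IsUnit M → ∀ u, M.mulVec u = 0 → u = 0 := by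
    rintro M ⟨U, rfl⟩ u hu
    have : ((U⁻¹ : _ˣ) : Matrix (Fin p) (Fin p) ℂ).mulVec ((U : Matrix (Fin p) (Fin p) ℂ).mulVec u) = u := by
      rw [Matrix.mulVec_mulVec, Units.inv_mul, Matrix.one_mulVec]
    rw [hu, Matrix.mulVec_zero] at this
    exact this.symm
  set f : Module.End ℂ (Fin p → ℂ) := A.mulVecLin with hf
  obtain ⟨lam, hlam⟩ := Module.End.exists_eigenvalue f
  obtain ⟨v, hv⟩ := hlam.exists_hasEigenvector
  have hAv : A.mulVec v = lam • v := hv.apply_eq_smul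
  have hlam0 : lam ≠ 0 := by
    rintro rfl
    exact hv.2 (hinj A hA v (by simpa using hAv))
  set vv : ℕ → (Fin p → ℂ) := fun k => (B ^ k).mulVec v with hvv
  have hvv0 : vv 0 = v := by simp [hvv]
  have hvvsucc : ∀ k, vv (k + 1) = B.mulVec (vv k) := by
    intro k
    simp [hvv, pow_succ', Matrix.mulVec_mulVec]
  have hAvv : ∀ k, A.mulVec (vv k) = (ζ ^ k * lam) • vv k := by
    intro k
    induction k with
    | zero => simpa [hvv0] using hAv
    | succ k ih =>
      rw [hvvsucc, Matrix.mulVec_mulVec, hAB, Matrix.smul_mulVec, ← Matrix.mulVec_mulVec,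
        ih, Matrix.mulVec_smul, smul_smul]
      congr 1
      rw [pow_succ]
      ring
  have hvvne : ∀ k, vv k ≠ 0 := by
    intro k hk
    exact hv.2 (hinj _ (hB.pow k) v hk)
  have heig : ∀ k : Fin p, f.HasEigenvector (ζ ^ (k : ℕ) * lam) (vv k) := by
    intro k
    exact ⟨Module.End.mem_eigenspace_iff.2 (hAvv k), hvvne k⟩
  have hμinj : Function.Injective (fun k : Fin p => ζ ^ (k : ℕ) * lam) := by
    intro i j hij
    exact Fin.ext (hζpow _ _ i.2 j.2 (mul_right_cancel₀ hlam0 hij))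
  have li : LinearIndependent ℂ (fun k : Fin p => vv k) :=
    Module.End.eigenvectors_linearIndependent' f _ hμinj _ heig
  have hcard : Fintype.card (Fin p) = Module.finrank ℂ (Fin p → ℂ) := by
    simp [Module.finrank_pi]
  set b := basisOfLinearIndependentOfCardEqFinrank li hcard with hb
  have hbk : ∀ k : Fin p, b k = vv k := by
    intro k; rw [hb, coe_basisOfLinearIndependentOfCardEqFinrank]
  set u : Fin p → ℂ := W.mulVec v with hu
  have hAu : A.mulVec u = lam • u := by
    rw [hu, Matrix.mulVec_mulVec, ← hWA, ← Matrix.mulVec_mulVec, hAv, Matrix.mulVec_smul]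
  set i0 : Fin p := ⟨0, hp.pos⟩ with hi0
  have hsum : ∑ j : Fin p, (b.repr u) j • b j = u := b.sum_repr u
  have hsumv : ∑ j : Fin p, (b.repr u) j • vv (j : ℕ) = u := by
    calc ∑ j : Fin p, (b.repr u) j • vv (j : ℕ)
        = ∑ j : Fin p, (b.repr u) j • b j := Finset.sum_congr rfl fun j _ => by rw [hbk]
      _ = u := hsum
  have hrepr : ∀ k : Fin p, k ≠ i0 → b.repr u k = 0 := by
    intro k hk
    have h1 : ∀ j : Fin p, f ((b.repr u j) • b j) = ((b.repr u j) * (ζ ^ (j:ℕ) * lam)) • vv (j:ℕ) := by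
      intro j
      rw [LinearMap.map_smul, hbk]
      show (b.repr u) j • A.mulVecLin (vv (j:ℕ)) = _
      rw [Matrix.mulVecLin_apply, hAvv j, smul_smul]
    have h1' : ∑ j : Fin p, ((b.repr u j) * (ζ ^ (j:ℕ) * lam)) • vv (j:ℕ) = lam • u := by
      calc ∑ j : Fin p, ((b.repr u j) * (ζ ^ (j:ℕ) * lam)) • vv (j:ℕ)
          = ∑ j : Fin p, f ((b.repr u j) • b j) := Finset.sum_congr rfl fun j _ => (h1 j).symm
        _ = f (∑ j : Fin p, (b.repr u j) • b j) := (map_sum f _ _).symm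
        _ = A.mulVec u := by rw [hsum]; exact Matrix.mulVecLin_apply _ _
        _ = lam • u := hAu
    have h2 : ∑ j : Fin p, (lam * (b.repr u j)) • vv (j:ℕ) = lam • u := by
      calc ∑ j : Fin p, (lam * (b.repr u j)) • vv (j:ℕ)
          = lam • ∑ j : Fin p, (b.repr u j) • vv (j:ℕ) := by
            rw [Finset.smul_sum]
            exact Finset.sum_congr rfl fun j _ => (mul_smul _ _ _)
        _ = lam • u := by rw [hsumv]
    have h3 : ∑ j : Fin p, ((b.repr u j) * (ζ ^ (j:ℕ) * lam) - lam * (b.repr u j)) • vv (j:ℕ) = 0 := by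
      simp only [sub_smul, Finset.sum_sub_distrib, h1', h2, sub_self]
    have h4 := (Fintype.linearIndependent_iff.1 li) _ h3 k
    have hζk : ζ ^ (k : ℕ) ≠ 1 := by
      intro h
      exact hk (Fin.ext (hζpow (k : ℕ) 0 k.2 hp.pos (by simpa using h)))
    have h5 : b.repr u k * ((ζ ^ (k:ℕ) - 1) * lam) = 0 := by linear_combination h4
    exact (mul_eq_zero.1 h5).resolve_right
      (mul_ne_zero (sub_ne_zero_of_ne hζk) hlam0)
  set t : ℂ := b.repr u i0 with ht
  have hWv : W.mulVec v = t • v := by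
    rw [← hu, ← hsumv, Finset.sum_eq_single i0
      (fun j _ hj => by rw [hrepr j hj, zero_smul])
      (fun h => absurd (Finset.mem_univ i0) h)]
    have hvvi0 : vv ((i0 : Fin p) : ℕ) = v := hvv0
    rw [hvvi0, ht]
  have hWvk : ∀ k : ℕ, W.mulVec (vv k) = t • vv k := by
    intro k
    induction k with
    | zero => rw [hvv0]; exact hWv
    | succ k ih =>
      rw [hvvsucc, Matrix.mulVec_mulVec, hWB, ← Matrix.mulVec_mulVec, ih, Matrix.mulVec_smul]
  refine ⟨t, ?_⟩
  have hlin : Matrix.toLin' W = Matrix.toLin' (t • (1 : Matrix (Fin p) (Fin p) ℂ)) := by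
    apply b.ext
    intro k
    rw [hbk, Matrix.toLin'_apply, Matrix.toLin'_apply, hWvk, Matrix.smul_mulVec,
      Matrix.one_mulVec]
  exact Matrix.toLin'.injective hlin

lemma SU.mat_mul {p : ℕ} (a b : SU p) : SU.mat (a * b) = SU.mat a * SU.mat b := rfl

lemma SU.mat_injective {p : ℕ} : Function.Injective (SU.mat (p := p)) :=
  fun a b h => Subtype.ext (Subtype.ext h)

open Matrix in
lemma SU.center_scalar {p : ℕ} (hp : 0 < p) (c : SU p) (hc : c ∈ Subgroup.center (SU p)) :
    ∃ ζ : ℂ, SU.mat c = ζ • (1 : Matrix (Fin p) (Fin p) ℂ) := by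
  classical
  set C := SU.mat c with hC
  have key : ∀ (M : Matrix (Fin p) (Fin p) ℂ), (hM : M ∈ Matrix.unitaryGroup (Fin p) ℂ) →
      M.det = 1 → C * M = M * C := by
    intro M hM hdet
    have hmem : (⟨M, hM⟩ : Matrix.unitaryGroup (Fin p) ℂ) ∈ SUgrp p := by
      simpa [SUgrp, MonoidHom.mem_ker] using hdet
    have h := Subgroup.mem_center_iff.1 hc ⟨⟨M, hM⟩, hmem⟩
    have h2 := congrArg SU.mat h
    rw [SU.mat_mul, SU.mat_mul] at h2
    exact (h2).symm
  -- diagonal matrix with distinct entries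
  have h2p : (2 * p : ℕ) ≠ 0 := by omega
  set ω : ℂ := Complex.exp (2 * Real.pi * Complex.I / (2 * p)) with hω
  have hωprim : IsPrimitiveRoot ω (2 * p) := by
    have := Complex.isPrimitiveRoot_exp (2 * p) h2p
    simpa [hω] using this
  have hωne : ω ≠ 0 := Complex.exp_ne_zero _
  have hωabs : ‖ω‖ = 1 := by
    have : ω ^ (2 * p) = 1 := hωprim.pow_eq_one
    simpa using Complex.norm_eq_one_of_pow_eq_one this h2p
  set d : Fin p → ℂ := fun k => ω ^ (2 * (k : ℕ)) * (ω ^ (p - 1))⁻¹ with hd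
  have hdne : ∀ k, d k ≠ 0 := fun k =>
    mul_ne_zero (pow_ne_zero _ hωne) (inv_ne_zero (pow_ne_zero _ hωne))
  have hdabs : ∀ k, ‖d k‖ = 1 := by
    intro k
    simp [hd, hωabs]
  have hdinj : Function.Injective d := by
    intro i j hij
    have h1 : ω ^ (2 * (i : ℕ)) = ω ^ (2 * (j : ℕ)) :=
      mul_right_cancel₀ (inv_ne_zero (pow_ne_zero _ hωne)) hij
    have := hωprim.pow_inj (by omega : 2 * (i : ℕ) < 2 * p) (by omega : 2 * (j : ℕ) < 2 * p) h1
    exact Fin.ext (by omega)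
  have hDmem : Matrix.diagonal d ∈ Matrix.unitaryGroup (Fin p) ℂ := by
    rw [Matrix.mem_unitaryGroup_iff]
    show Matrix.diagonal d * (Matrix.diagonal d)ᴴ = 1
    rw [Matrix.diagonal_conjTranspose, Matrix.diagonal_mul_diagonal]
    have h1 : ∀ i, d i * star d i = 1 := by
      intro i
      have h2 := Complex.mul_conj (d i)
      rw [show star d i = (starRingEnd ℂ) (d i) from rfl, h2, Complex.normSq_eq_norm_sq, hdabs]
      norm_num
    calc Matrix.diagonal (fun i => d i * star d i) = Matrix.diagonal (fun _ => (1:ℂ)) :=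
          congrArg _ (funext h1)
      _ = 1 := Matrix.diagonal_one
  have hDdet : (Matrix.diagonal d).det = 1 := by
    rw [Matrix.det_diagonal]
    have hsplit : ∏ k : Fin p, d k = (∏ k : Fin p, ω ^ (2 * (k:ℕ))) * ((ω ^ (p-1))⁻¹) ^ p := by
      rw [hd, Finset.prod_mul_distrib, Finset.prod_const, Finset.card_univ, Fintype.card_fin]
    have hsum : ∑ k : Fin p, 2 * (k : ℕ) = p * (p - 1) := by
      rw [Fin.sum_univ_eq_sum_range (fun k => 2 * k), ← Finset.mul_sum]
      have := Finset.sum_range_id_mul_two p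
      omega
    have hprodpow : ∏ k : Fin p, ω ^ (2 * (k:ℕ)) = ω ^ (p * (p - 1)) := by
      rw [← hsum, ← Finset.prod_pow_eq_pow_sum]
    rw [hsplit, hprodpow, inv_pow, ← pow_mul]
    rw [Nat.mul_comm (p - 1) p]
    exact mul_inv_cancel₀ (pow_ne_zero _ hωne)
  have hCD := key _ hDmem hDdet
  have hoffdiag : ∀ i j : Fin p, i ≠ j → C i j = 0 := by
    intro i j hij
    have h1 : C i j * d j = d i * C i j := by
      rw [← Matrix.mul_diagonal, ← Matrix.diagonal_mul, hCD]
    have h2 : C i j * (d j - d i) = 0 := by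
      rw [mul_sub, h1]; ring
    rcases mul_eq_zero.1 h2 with h | h
    · exact h
    · exact absurd (hdinj (sub_eq_zero.1 h)) (Ne.symm hij)
  -- swap-type matrices force constant diagonal
  set g : Fin p → ℂ := fun k => C k k with hg
  have hgconst : ∀ i j : Fin p, g i = g j := by
    intro i j
    by_cases hij : i = j
    · rw [hij]
    · set σ := Equiv.swap i j with hσ
      set wv : Fin p → ℂ := fun k => if k = i then (-1 : ℂ) else 1 with hwv
      set T : Matrix (Fin p) (Fin p) ℂ := fun a b => if σ a = b then wv b else 0 with hT
      have hTperm : T = (Equiv.Perm.permMatrix ℂ σ) * Matrix.diagonal wv := by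
        ext a b
        rw [Matrix.mul_diagonal]
        simp only [hT, Equiv.Perm.permMatrix, PEquiv.toMatrix, Equiv.toPEquiv,
          Option.mem_def, Matrix.of_apply]
        by_cases h : σ a = b <;> simp [h]
      have hTdet : T.det = 1 := by
        rw [hTperm, Matrix.det_mul, Matrix.det_permutation, Matrix.det_diagonal]
        rw [Equiv.Perm.sign_swap hij]
        have : ∏ k : Fin p, wv k = -1 := by
          rw [hwv]
          rw [Finset.prod_ite_eq' Finset.univ i (fun _ => (-1 : ℂ))]
          simp
        rw [this]
        norm_num
      have hTval : ∀ a b, T a b = if σ a = b then wv b else 0 := fun a b => rfl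
      have hTzero : ∀ a b, σ a ≠ b → T a b = 0 := by
        intro a b h; rw [hTval, if_neg h]
      have hTmem : T ∈ Matrix.unitaryGroup (Fin p) ℂ := by
        rw [Matrix.mem_unitaryGroup_iff]
        ext a b
        rw [Matrix.mul_apply]
        have hside : ∀ k ∈ Finset.univ, k ≠ σ a → T a k * (star T) k b = 0 := by
          intro k _ hk
          rw [hTzero a k (fun h => hk h.symm), zero_mul]
        rw [Finset.sum_eq_single (σ a) hside (fun h => absurd (Finset.mem_univ _) h)]
        have hstar : (star T) (σ a) b = star (T b (σ a)) := rfl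
        rw [hstar, hTval a (σ a), if_pos rfl]
        by_cases hab : a = b
        · subst hab
          rw [hTval a (σ a), if_pos rfl]
          have habs : ‖wv (σ a)‖ = 1 := by
            by_cases h : σ a = i <;> simp [hwv, h]
          rw [show star (wv (σ a)) = (starRingEnd ℂ) (wv (σ a)) from rfl, Complex.mul_conj,
            Complex.normSq_eq_norm_sq, habs, Matrix.one_apply_eq]
          norm_num
        · rw [hTzero b (σ a) (fun h => hab (σ.injective h.symm)), star_zero, mul_zero,
            Matrix.one_apply_ne hab]
      have hCT := key _ hTmem hTdet
      have hσj : σ j = i := Equiv.swap_apply_right i j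
      have hσi : σ i = j := Equiv.swap_apply_left i j
      have hL : (C * T) j i = g j * wv i := by
        rw [Matrix.mul_apply]
        have hside : ∀ k ∈ Finset.univ, k ≠ j → C j k * T k i = 0 := by
          intro k _ hk
          rw [hTzero k i (fun h => hk (by rw [← hσj] at h; exact σ.injective h)), mul_zero]
        rw [Finset.sum_eq_single j hside (fun h => absurd (Finset.mem_univ _) h)]
        rw [hTval j i, if_pos hσj]
      have hR : (T * C) j i = wv i * g i := by
        rw [Matrix.mul_apply]
        have hside : ∀ k ∈ Finset.univ, k ≠ i → T j k * C k i = 0 := by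
          intro k _ hk
          rw [hTzero j k (fun h => hk (by rw [← h, hσj])), zero_mul]
        rw [Finset.sum_eq_single i hside (fun h => absurd (Finset.mem_univ _) h)]
        rw [hTval j i, if_pos hσj]
      have heq : g j * wv i = wv i * g i := by rw [← hL, ← hR, hCT]
      have hwvi : wv i = -1 := by rw [hwv]; simp
      rw [hwvi] at heq
      linear_combination heq
  refine ⟨g ⟨0, hp⟩, ?_⟩
  ext a b
  rw [Matrix.smul_apply, Matrix.one_apply]
  by_cases hab : a = b
  · subst hab
    rw [if_pos rfl, smul_eq_mul, mul_one]
    exact hgconst a ⟨0, hp⟩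
  · rw [if_neg hab, smul_eq_mul, mul_zero]
    exact hoffdiag a b hab
lemma central_mul_inv_cancel {G : Type*} [Group G] {k u v : G} (h : ∀ g, Commute k g) :
    (k * u) * (k * v)⁻¹ = u * v⁻¹ := by
  rw [mul_inv_rev]
  have h2 : k * (u * v⁻¹) = (u * v⁻¹) * k := (h (u * v⁻¹)).eq
  calc k * u * (v⁻¹ * k⁻¹) = k * (u * v⁻¹) * k⁻¹ := by group
    _ = (u * v⁻¹) * k * k⁻¹ := by rw [h2]
    _ = u * v⁻¹ := by group

lemma central_conj_cancel {G : Type*} [Group G] {k u vi w : G} (h : ∀ g, Commute k g) :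
    (k * u) * vi * (k⁻¹ * w) = u * vi * w := by
  have h2 : k * (u * vi) = (u * vi) * k := (h (u * vi)).eq
  calc (k * u) * vi * (k⁻¹ * w) = k * (u * vi) * k⁻¹ * w := by group
    _ = (u * vi) * k * k⁻¹ * w := by rw [h2]
    _ = u * vi * w := by group

open scoped commutatorElement

/-- For a prime `p`, `m ≥ 1`, a nontrivial central element `c` of `SU(p)`, and tuples
`x, y, z ∈ SU(p)^m` with `⁅xᵢ, yᵢ⁆ = c`, `⁅xᵢ, zᵢ⁆ = c^b` and `⁅yᵢ, zᵢ⁆ = c^a` for all `i`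
(with `0 ≤ a, b < p`), there is a central tuple `w` with `zᵢ = wᵢ · xᵢ⁻ᵃ · yᵢᵇ` for all `i`. -/
theorem almost_commuting_triple_structure (p m : ℕ) (hp : p.Prime) (hm : 1 ≤ m)
    (c : SU p) (hc : c ∈ Subgroup.center (SU p)) (hc1 : c ≠ 1)
    (x y z : Fin m → SU p) (a b : ℕ) (ha : a < p) (hb : b < p)
    (hxy : ∀ i, ⁅x i, y i⁆ = c)
    (hxz : ∀ i, ⁅x i, z i⁆ = c ^ b)
    (hyz : ∀ i, ⁅y i, z i⁆ = c ^ a) :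
    ∃ w : Fin m → SU p, (∀ i, w i ∈ Subgroup.center (SU p)) ∧
      ∀ i, z i = w i * (x i) ^ (-(a : ℤ)) * (y i) ^ (b : ℤ) := by
  classical
  obtain ⟨ζ, hζ⟩ := SU.center_scalar hp.pos c hc
  have hdet : (SU.mat c).det = 1 := by
    exact c.2
  have hζp : ζ ^ p = 1 := by
    rw [hζ, Matrix.det_smul, Matrix.det_one, Fintype.card_fin, mul_one] at hdet
    exact hdet
  have hζ1 : ζ ≠ 1 := by
    rintro rfl
    apply hc1
    apply SU.mat_injective
    rw [hζ, one_smul]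
    rfl
  have hcomc : ∀ g : SU p, Commute c g := fun g => (Subgroup.mem_center_iff.1 hc g).symm
  have hkey : ∀ i, (z i * ((y i) ^ b)⁻¹ * (x i) ^ a) ∈ Subgroup.center (SU p) := by
    intro i
    set X := x i with hX
    set Y := y i with hY
    set Z := z i with hZ
    set W : SU p := Z * (Y ^ b)⁻¹ * X ^ a with hW
    have hXY : X * Y = c * Y * X := by
      have h := hxy i
      rw [commutatorElement_def] at h
      rw [← h, hX, hY]; group
    have s1 : SemiconjBy X Z ((c ^ b) * Z) := by
      show X * Z = ((c ^ b) * Z) * X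
      have h := hxz i
      rw [commutatorElement_def] at h
      rw [← h, hX, hZ]; group
    have s2 : SemiconjBy X Y (c * Y) := by
      show X * Y = (c * Y) * X
      rw [hXY]
    have s2b : SemiconjBy X (Y ^ b) ((c ^ b) * (Y ^ b)) := by
      have := s2.pow_right b
      rwa [(hcomc Y).mul_pow b] at this
    have s2c : SemiconjBy X ((Y ^ b)⁻¹) (((c ^ b) * (Y ^ b))⁻¹) := s2b.inv_right
    have s3 : SemiconjBy X (X ^ a) (X ^ a) := (Commute.refl X).pow_right a
    have stot := (s1.mul_right s2c).mul_right s3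
    have heq1 : ((c ^ b) * Z) * ((c ^ b) * (Y ^ b))⁻¹ * (X ^ a) = W := by
      rw [central_mul_inv_cancel (fun g => (hcomc g).pow_left b), hW]
    rw [heq1] at stot
    -- Y side
    have sY1 : SemiconjBy Y Z ((c ^ a) * Z) := by
      show Y * Z = ((c ^ a) * Z) * Y
      have h := hyz i
      rw [commutatorElement_def] at h
      rw [← h, hY, hZ]; group
    have sY2 : SemiconjBy Y ((Y ^ b)⁻¹) ((Y ^ b)⁻¹) := ((Commute.refl Y).pow_right b).inv_right
    have sY3 : SemiconjBy Y X (c⁻¹ * X) := by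
      show Y * X = (c⁻¹ * X) * Y
      have : (c⁻¹ * X) * Y = Y * X := by
        rw [mul_assoc, hXY]; group
      rw [this]
    have sY3b : SemiconjBy Y (X ^ a) ((c ^ a)⁻¹ * (X ^ a)) := by
      have := sY3.pow_right a
      rwa [(hcomc X).inv_left.mul_pow a, inv_pow] at this
    have sYtot := (sY1.mul_right sY2).mul_right sY3b
    have heq2 : ((c ^ a) * Z) * ((Y ^ b)⁻¹) * ((c ^ a)⁻¹ * (X ^ a)) = W := by
      rw [central_conj_cancel (fun g => (hcomc g).pow_left a), hW]
    rw [heq2] at sYtot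
    -- now matrices
    have hXW : X * W = W * X := stot
    have hYW : Y * W = W * Y := sYtot
    have hABmat : SU.mat X * SU.mat Y = ζ • (SU.mat Y * SU.mat X) := by
      have h := congrArg SU.mat hXY
      rw [SU.mat_mul, SU.mat_mul, SU.mat_mul, hζ] at h
      rw [h, smul_mul_assoc, smul_mul_assoc, one_mul]
    have hWA : SU.mat W * SU.mat X = SU.mat X * SU.mat W := by
      have h := congrArg SU.mat hXW
      rw [SU.mat_mul, SU.mat_mul] at h
      exact h.symm
    have hWB : SU.mat W * SU.mat Y = SU.mat Y * SU.mat W := by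
      have h := congrArg SU.mat hYW
      rw [SU.mat_mul, SU.mat_mul] at h
      exact h.symm
    have hunit : ∀ g : SU p, IsUnit (SU.mat g) := by
      intro g
      have hm := g.1.2
      rw [Matrix.mem_unitaryGroup_iff] at hm
      have hm2 : star (SU.mat g) * SU.mat g = 1 := by
        have := g.1.2
        exact Unitary.star_mul_self_of_mem this
      exact ⟨⟨SU.mat g, star (SU.mat g), hm, hm2⟩, rfl⟩
    obtain ⟨μ, hμ⟩ := scalar_of_commutes hp ζ hζp hζ1 (SU.mat X) (SU.mat Y) (SU.mat W)
      (hunit X) (hunit Y) hABmat hWA hWB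
    rw [Subgroup.mem_center_iff]
    intro g
    apply SU.mat_injective
    show SU.mat (g * W) = SU.mat (W * g)
    rw [SU.mat_mul g W, SU.mat_mul W g, hμ, mul_smul_comm, smul_mul_assoc, one_mul, mul_one]
  refine ⟨fun i => z i * ((y i) ^ b)⁻¹ * (x i) ^ a, hkey, fun i => ?_⟩
  rw [zpow_neg, zpow_natCast, zpow_natCast]
  group
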